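/- arXiv:2509.24311 — 2 statements merged into one kernel-verified Lean document; each statement's English description precedes it below -/
import Mathlib

section
/- Let g = (g₁,g₂,g₃) be integers and let (p,q,r) be a phase. Write p−g₁ = s₁·a₁ + p′ with 0 ≤ p′ < s₁, q−g₂ = s₂·a₂ + q′ with 0 ≤ q′ < s₂, and r−g₃ = s₃·a₃ + r′ with 0 ≤ r′ < s₃ (a₁,a₂,a₃ ∈ ℤ). Then for every volume X and all coarse-grid indices (i,j,k), Ψ(T_g X)_{(p,q,r)}(i,j,k) = Ψ(X)_{(p′,q′,r′)}(i+a₁, j+a₂, k+a₃); equivalently, Ψ(T_g X)_{(p,q,r)} = T_{(−a₁,−a₂,−a₃)} Ψ(X)_{(p′,q′,r′)} as functions on the coarse grid. -/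
noncomputable section

/-- The well-defined map `ZMod n → ZMod (n*s)` induced by `a ↦ s*a + p`. -/
def phaseEmb (n s : ℕ) (p : ℤ) (i : ZMod n) : ZMod (n * s) :=
  (s : ZMod (n * s)) * (i.val : ZMod (n * s)) + (p : ZMod (n * s))

/-- Circular translation of a volume by an integer vector `g`:
`(T_g X)(i,j,k) = X(i-g₁, j-g₂, k-g₃)`. -/
def Tvol {D H W : ℕ} (g : ℤ × ℤ × ℤ) (X : ZMod D × ZMod H × ZMod W → ℝ) :
    ZMod D × ZMod H × ZMod W → ℝ :=
  fun v => X (v.1 - (g.1 : ZMod D), v.2.1 - (g.2.1 : ZMod H), v.2.2 - (g.2.2 : ZMod W))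

/-- Circular translation on the coarse grid. -/
def Tcoarse {n₁ n₂ n₃ : ℕ} (h : ℤ × ℤ × ℤ) (Y : ZMod n₁ × ZMod n₂ × ZMod n₃ → ℝ) :
    ZMod n₁ × ZMod n₂ × ZMod n₃ → ℝ :=
  fun v => Y (v.1 - (h.1 : ZMod n₁), v.2.1 - (h.2.1 : ZMod n₂), v.2.2 - (h.2.2 : ZMod n₃))

/-- Polyphase component `Ψ(X)_{(p,q,r)}(i,j,k) = X(s₁·i+p, s₂·j+q, s₃·k+r)`. -/
def Psi (s₁ s₂ s₃ n₁ n₂ n₃ : ℕ) (p q r : ℤ)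
    (X : ZMod (n₁ * s₁) × ZMod (n₂ * s₂) × ZMod (n₃ * s₃) → ℝ) :
    ZMod n₁ × ZMod n₂ × ZMod n₃ → ℝ :=
  fun v => X (phaseEmb n₁ s₁ p v.1, phaseEmb n₂ s₂ q v.2.1, phaseEmb n₃ s₃ r v.2.2)


lemma phaseEmb_key (n s : ℕ) (hn : 0 < n) (p g p' a : ℤ)
    (h : p - g = (s : ℤ) * a + p') (i : ZMod n) :
    phaseEmb n s p i - (g : ZMod (n * s)) = phaseEmb n s p' (i + (a : ZMod n)) := by
  haveI : NeZero n := ⟨hn.ne'⟩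
  have hdvd : (n : ℤ) ∣ (((i + (a : ZMod n)).val : ℤ) - ((i.val : ℤ) + a)) := by
    rw [← ZMod.intCast_zmod_eq_zero_iff_dvd]
    push_cast [ZMod.natCast_val, ZMod.cast_id]
    ring
  obtain ⟨k, hk⟩ := hdvd
  have e : ((s : ℤ) * (((i + (a : ZMod n)).val : ℕ) : ℤ) + p' : ℤ)
      = ((s : ℤ) * ((i.val : ℕ) : ℤ) + p - g) + (((n * s : ℕ) : ℤ)) * k := by
    push_cast
    linear_combination (s : ℤ) * hk - h
  have e2 := congrArg (fun z : ℤ => (z : ZMod (n * s))) e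
  simp only [Int.cast_add, Int.cast_mul, Int.cast_sub, Int.cast_natCast,
    ZMod.natCast_self, zero_mul, add_zero] at e2
  unfold phaseEmb
  linear_combination e2.symm

/-- Polyphase decomposition intertwines circular translations:
if `p - g₁ = s₁·a₁ + p'` with `0 ≤ p' < s₁` (and similarly in the other axes), then
`Ψ(T_g X)_{(p,q,r)}(i,j,k) = Ψ(X)_{(p',q',r')}(i+a₁, j+a₂, k+a₃)`, equivalently
`Ψ(T_g X)_{(p,q,r)} = T_{(-a₁,-a₂,-a₃)} Ψ(X)_{(p',q',r')}` on the coarse grid. -/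
theorem polyphase_decomposition_translation
    (s₁ s₂ s₃ n₁ n₂ n₃ : ℕ)
    (hs₁ : 0 < s₁) (hs₂ : 0 < s₂) (hs₃ : 0 < s₃)
    (hn₁ : 0 < n₁) (hn₂ : 0 < n₂) (hn₃ : 0 < n₃)
    (g₁ g₂ g₃ p q r p' q' r' a₁ a₂ a₃ : ℤ)
    (hp0 : 0 ≤ p) (hps : p < (s₁ : ℤ))
    (hq0 : 0 ≤ q) (hqs : q < (s₂ : ℤ))
    (hr0 : 0 ≤ r) (hrs : r < (s₃ : ℤ))
    (hdec₁ : p - g₁ = (s₁ : ℤ) * a₁ + p') (hp'0 : 0 ≤ p') (hp's : p' < (s₁ : ℤ))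
    (hdec₂ : q - g₂ = (s₂ : ℤ) * a₂ + q') (hq'0 : 0 ≤ q') (hq's : q' < (s₂ : ℤ))
    (hdec₃ : r - g₃ = (s₃ : ℤ) * a₃ + r') (hr'0 : 0 ≤ r') (hr's : r' < (s₃ : ℤ))
    (X : ZMod (n₁ * s₁) × ZMod (n₂ * s₂) × ZMod (n₃ * s₃) → ℝ) :
    (∀ (i : ZMod n₁) (j : ZMod n₂) (k : ZMod n₃),
      Psi s₁ s₂ s₃ n₁ n₂ n₃ p q r (Tvol (g₁, g₂, g₃) X) (i, j, k)
        = Psi s₁ s₂ s₃ n₁ n₂ n₃ p' q' r' X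
            (i + (a₁ : ZMod n₁), j + (a₂ : ZMod n₂), k + (a₃ : ZMod n₃)))
    ∧ Psi s₁ s₂ s₃ n₁ n₂ n₃ p q r (Tvol (g₁, g₂, g₃) X)
        = Tcoarse (-a₁, -a₂, -a₃) (Psi s₁ s₂ s₃ n₁ n₂ n₃ p' q' r' X) := by
  have main : ∀ (i : ZMod n₁) (j : ZMod n₂) (k : ZMod n₃),
      Psi s₁ s₂ s₃ n₁ n₂ n₃ p q r (Tvol (g₁, g₂, g₃) X) (i, j, k)
        = Psi s₁ s₂ s₃ n₁ n₂ n₃ p' q' r' X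
            (i + (a₁ : ZMod n₁), j + (a₂ : ZMod n₂), k + (a₃ : ZMod n₃)) := by
    intro i j k
    unfold Psi Tvol
    simp only
    rw [phaseEmb_key n₁ s₁ hn₁ p g₁ p' a₁ hdec₁ i,
        phaseEmb_key n₂ s₂ hn₂ q g₂ q' a₂ hdec₂ j,
        phaseEmb_key n₃ s₃ hn₃ r g₃ r' a₃ hdec₃ k]
  refine ⟨main, ?_⟩
  funext v
  have := main v.1 v.2.1 v.2.2
  unfold Tcoarse
  simpa [sub_neg_eq_add] using this
end
end

section
/- Fix a real exponent t ≥ 1 and define the phase norm N_{(p,q,r)}(X) = (Σ_{(i,j,k)} |Ψ(X)_{(p,q,r)}(i,j,k)|^t)^{1/t}, the sum running over all coarse-grid indices. Then for every volume X, all integers g = (g₁,g₂,g₃), and every phase (p,q,r), one has N_{(p,q,r)}(T_g X) = N_{(p′,q′,r′)}(X), where p′ = (p−g₁) mod s₁, q′ = (q−g₂) mod s₂, r′ = (r−g₃) mod s₃. In particular, the multiset of phase norms of T_g X equals that of X. -/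
noncomputable section

open scoped BigOperators

/-- Phase norm `N_{(p,q,r)}(X) = (Σ_{(i,j,k)} |Ψ(X)_{(p,q,r)}(i,j,k)|^t)^{1/t}`. -/
noncomputable def phaseNorm (s₁ s₂ s₃ n₁ n₂ n₃ : ℕ) [NeZero n₁] [NeZero n₂] [NeZero n₃]
    (t : ℝ) (p q r : ℤ)
    (X : ZMod (n₁ * s₁) × ZMod (n₂ * s₂) × ZMod (n₃ * s₃) → ℝ) : ℝ :=
  (∑ v : ZMod n₁ × ZMod n₂ × ZMod n₃,
      |Psi s₁ s₂ s₃ n₁ n₂ n₃ p q r X v| ^ t) ^ (1 / t)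

lemma phaseEmb_sub (n s : ℕ) [NeZero n] (p g : ℤ) (i : ZMod n) :
    phaseEmb n s p i - ((g : ℤ) : ZMod (n * s)) =
      phaseEmb n s ((p - g) % s) (i + (((p - g) / s : ℤ) : ZMod n)) := by
  set m : ℤ := (p - g) / s with hm
  set j : ZMod n := i + (m : ZMod n) with hjdef
  have h1 : phaseEmb n s p i - ((g : ℤ) : ZMod (n * s))
      = (((s : ℤ) * (i.val : ℤ) + p - g : ℤ) : ZMod (n * s)) := by
    simp [phaseEmb]
  have h2 : phaseEmb n s ((p - g) % s) j
      = (((s : ℤ) * (j.val : ℤ) + (p - g) % s : ℤ) : ZMod (n * s)) := by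
    simp [phaseEmb]
  rw [h1, h2]
  rw [ZMod.intCast_eq_intCast_iff]
  have hmod : (j.val : ℤ) ≡ ((i.val : ℤ) + m) [ZMOD (n : ℤ)] := by
    rw [← ZMod.intCast_eq_intCast_iff]
    push_cast
    rw [ZMod.natCast_rightInverse i, ZMod.natCast_rightInverse j]
  have h3 : (s : ℤ) * (j.val : ℤ) ≡ (s : ℤ) * ((i.val : ℤ) + m) [ZMOD ((s : ℤ) * n)] :=
    hmod.mul_left'
  have h4 : ((s : ℤ) * n) = ((n * s : ℕ) : ℤ) := by push_cast; ring
  have h5 : (s : ℤ) * (j.val : ℤ) + (p - g) % s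
      ≡ (s : ℤ) * ((i.val : ℤ) + m) + (p - g) % s [ZMOD ((n * s : ℕ) : ℤ)] := by
    rw [← h4]; exact h3.add_right _
  have h6 : (s : ℤ) * ((i.val : ℤ) + m) + (p - g) % s = (s : ℤ) * (i.val : ℤ) + p - g := by
    have := Int.mul_ediv_add_emod (p - g) (s : ℤ)
    rw [hm]; ring_nf; omega
  calc (s : ℤ) * (i.val : ℤ) + p - g ≡ _ [ZMOD ((n*s:ℕ):ℤ)] := (h6 ▸ h5).symm

lemma phaseNorm_Tvol (s₁ s₂ s₃ n₁ n₂ n₃ : ℕ) [NeZero n₁] [NeZero n₂] [NeZero n₃]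
    (t : ℝ) (p q r g₁ g₂ g₃ : ℤ)
    (X : ZMod (n₁ * s₁) × ZMod (n₂ * s₂) × ZMod (n₃ * s₃) → ℝ) :
    phaseNorm s₁ s₂ s₃ n₁ n₂ n₃ t p q r (Tvol (g₁, g₂, g₃) X)
      = phaseNorm s₁ s₂ s₃ n₁ n₂ n₃ t
          ((p - g₁) % (s₁ : ℤ)) ((q - g₂) % (s₂ : ℤ)) ((r - g₃) % (s₃ : ℤ)) X := by
  unfold phaseNorm
  congr 1
  refine Fintype.sum_equiv
    (Equiv.prodCongr (Equiv.addRight (((p - g₁) / s₁ : ℤ) : ZMod n₁))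
      (Equiv.prodCongr (Equiv.addRight (((q - g₂) / s₂ : ℤ) : ZMod n₂))
        (Equiv.addRight (((r - g₃) / s₃ : ℤ) : ZMod n₃)))) _ _ ?_
  intro v
  congr 2
  simp only [Psi, Tvol, Equiv.prodCongr_apply, Equiv.coe_addRight, Prod.map]
  rw [phaseEmb_sub, phaseEmb_sub, phaseEmb_sub]

def shiftFin (s : ℕ) (hs : 0 < s) (g : ℤ) (a : Fin s) : Fin s :=
  ⟨(((a : ℤ) - g) % s).toNat, by
    have h0 : (0:ℤ) < s := by exact_mod_cast hs
    have h1 := Int.emod_nonneg ((a:ℤ) - g) h0.ne'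
    have h2 := Int.emod_lt_of_pos ((a:ℤ) - g) h0
    omega⟩

lemma shiftFin_coe (s : ℕ) (hs : 0 < s) (g : ℤ) (a : Fin s) :
    ((shiftFin s hs g a : ℕ) : ℤ) = ((a : ℤ) - g) % s := by
  have h0 : (0:ℤ) < s := by exact_mod_cast hs
  exact Int.toNat_of_nonneg (Int.emod_nonneg _ h0.ne')

lemma shiftFin_inj (s : ℕ) (hs : 0 < s) (g : ℤ) :
    Function.Injective (shiftFin s hs g) := by
  intro a b h
  have h0 : (0:ℤ) < s := by exact_mod_cast hs
  have h' : ((a:ℤ) - g) % s = ((b:ℤ) - g) % s := by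
    have := congrArg (fun x : Fin s => ((x : ℕ) : ℤ)) h
    simpa [shiftFin_coe] using this
  have hmod : (a:ℤ) ≡ (b:ℤ) [ZMOD (s:ℤ)] := by
    have h'' : ((a:ℤ) - g) ≡ ((b:ℤ) - g) [ZMOD (s:ℤ)] := h'
    simpa using h''.add_right g
  have ha : (a:ℤ) % s = (a:ℤ) := Int.emod_eq_of_lt (by positivity) (by exact_mod_cast a.isLt)
  have hb : (b:ℤ) % s = (b:ℤ) := Int.emod_eq_of_lt (by positivity) (by exact_mod_cast b.isLt)
  have : (a:ℤ) = (b:ℤ) := by rw [Int.ModEq] at hmod; omega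
  exact Fin.ext (by exact_mod_cast this)

/-- For every volume `X`, translation `g` and phase `(p,q,r)`,
`N_{(p,q,r)}(T_g X) = N_{(p',q',r')}(X)` with `p' = (p-g₁) mod s₁`, etc.;
in particular, the multiset of phase norms of `T_g X` equals that of `X`. -/
theorem phase_norm_translation
    (s₁ s₂ s₃ n₁ n₂ n₃ : ℕ) [NeZero n₁] [NeZero n₂] [NeZero n₃]
    (hs₁ : 0 < s₁) (hs₂ : 0 < s₂) (hs₃ : 0 < s₃)
    (t : ℝ) (ht : 1 ≤ t)
    (X : ZMod (n₁ * s₁) × ZMod (n₂ * s₂) × ZMod (n₃ * s₃) → ℝ)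
    (g₁ g₂ g₃ p q r : ℤ)
    (hp0 : 0 ≤ p) (hps : p < (s₁ : ℤ))
    (hq0 : 0 ≤ q) (hqs : q < (s₂ : ℤ))
    (hr0 : 0 ≤ r) (hrs : r < (s₃ : ℤ)) :
    phaseNorm s₁ s₂ s₃ n₁ n₂ n₃ t p q r (Tvol (g₁, g₂, g₃) X)
      = phaseNorm s₁ s₂ s₃ n₁ n₂ n₃ t
          ((p - g₁) % (s₁ : ℤ)) ((q - g₂) % (s₂ : ℤ)) ((r - g₃) % (s₃ : ℤ)) X
    ∧ Multiset.map
        (fun k : Fin s₁ × Fin s₂ × Fin s₃ =>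
          phaseNorm s₁ s₂ s₃ n₁ n₂ n₃ t (k.1 : ℤ) (k.2.1 : ℤ) (k.2.2 : ℤ)
            (Tvol (g₁, g₂, g₃) X))
        Finset.univ.val
      = Multiset.map
        (fun k : Fin s₁ × Fin s₂ × Fin s₃ =>
          phaseNorm s₁ s₂ s₃ n₁ n₂ n₃ t (k.1 : ℤ) (k.2.1 : ℤ) (k.2.2 : ℤ) X)
        Finset.univ.val := by
  refine ⟨phaseNorm_Tvol s₁ s₂ s₃ n₁ n₂ n₃ t p q r g₁ g₂ g₃ X, ?_⟩
  have hσinj : Function.Injective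
      (fun k : Fin s₁ × Fin s₂ × Fin s₃ =>
        (shiftFin s₁ hs₁ g₁ k.1, shiftFin s₂ hs₂ g₂ k.2.1, shiftFin s₃ hs₃ g₃ k.2.2)) := by
    intro a b h
    simp only [Prod.mk.injEq] at h
    exact Prod.ext (shiftFin_inj s₁ hs₁ g₁ h.1)
      (Prod.ext (shiftFin_inj s₂ hs₂ g₂ h.2.1) (shiftFin_inj s₃ hs₃ g₃ h.2.2))
  let σ : (Fin s₁ × Fin s₂ × Fin s₃) ≃ (Fin s₁ × Fin s₂ × Fin s₃) :=
    Equiv.ofBijective _ (Finite.injective_iff_bijective.mp hσinj)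
  have hval : Multiset.map (⇑σ) Finset.univ.val = Finset.univ.val := by
    have := congrArg Finset.val (Finset.map_univ_equiv σ)
    simpa [Finset.map] using this
  calc Multiset.map
        (fun k : Fin s₁ × Fin s₂ × Fin s₃ =>
          phaseNorm s₁ s₂ s₃ n₁ n₂ n₃ t (k.1 : ℤ) (k.2.1 : ℤ) (k.2.2 : ℤ)
            (Tvol (g₁, g₂, g₃) X)) Finset.univ.val
      = Multiset.map
          ((fun k : Fin s₁ × Fin s₂ × Fin s₃ =>
            phaseNorm s₁ s₂ s₃ n₁ n₂ n₃ t (k.1 : ℤ) (k.2.1 : ℤ) (k.2.2 : ℤ) X) ∘ ⇑σ)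
          Finset.univ.val := by
        refine Multiset.map_congr rfl ?_
        intro k _
        simp only [Function.comp_apply]
        rw [phaseNorm_Tvol]
        congr 1 <;>
          simp [σ, Equiv.ofBijective, shiftFin_coe]
    _ = Multiset.map
          (fun k : Fin s₁ × Fin s₂ × Fin s₃ =>
            phaseNorm s₁ s₂ s₃ n₁ n₂ n₃ t (k.1 : ℤ) (k.2.1 : ℤ) (k.2.2 : ℤ) X)
          (Multiset.map (⇑σ) Finset.univ.val) := by
        rw [Multiset.map_map]
    _ = _ := by rw [hval]
end
end
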